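/- Let D = (P,𝓑) be a symmetric 2-(v,k,λ) design with λ > 1 and let G be a flag-transitive automorphism group of D, with block B ∈ 𝓑 and n ≥ 3. If either the setwise stabilizer G_B is isomorphic to the dihedral group D_{2n}, or the induced permutation group G_B^B is isomorphic to D_{2n}, then G_B acts faithfully on B, i.e., the pointwise stabilizer G_{(B)} is trivial. -/

import Mathlib

open scoped Pointwise

/-- A group action is primitive if it is transitive and every block is trivial
(this is the usual notion of a primitive permutation group). -/
def IsPrimitiveAction (G X : Type*) [Group G] [MulAction G X] : Prop :=
  MulAction.IsPretransitive G X ∧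
    ∀ B : Set X, MulAction.IsBlock G B → B.Subsingleton ∨ B = Set.univ

variable {P : Type*} [Fintype P] [DecidableEq P]

/-- `𝓑` is the block set of a (non-trivial) 2-design with parameters `(v, k, lam)`
on the point set `P`. -/
structure IsDesign (𝓑 : Finset (Finset P)) (v k lam : ℕ) : Prop where
  card_points : Fintype.card P = v
  blocks_card : ∀ B ∈ 𝓑, B.card = k
  two_lt_k : 2 < k
  k_lt_v : k < v - 1
  lam_pos : 0 < lam
  pair_blocks : ∀ x y : P, x ≠ y → (𝓑.filter fun B => x ∈ B ∧ y ∈ B).card = lam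

/-- `G` is an automorphism group of the design with block set `𝓑`:
every element of `G` maps blocks to blocks. -/
def IsAutGroup (G : Subgroup (Equiv.Perm P)) (𝓑 : Finset (Finset P)) : Prop :=
  ∀ g ∈ G, ∀ B ∈ 𝓑, g • B ∈ 𝓑

/-- `G` acts transitively on the flags of the design with block set `𝓑`. -/
def IsFlagTransitive (G : Subgroup (Equiv.Perm P)) (𝓑 : Finset (Finset P)) : Prop :=
  ∀ B₁ ∈ 𝓑, ∀ B₂ ∈ 𝓑, ∀ x₁ ∈ B₁, ∀ x₂ ∈ B₂, ∃ g ∈ G, g • x₁ = x₂ ∧ g • B₁ = B₂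

/-- `G` acts transitively on the blocks of the design with block set `𝓑`. -/
def IsBlockTransitive (G : Subgroup (Equiv.Perm P)) (𝓑 : Finset (Finset P)) : Prop :=
  ∀ B₁ ∈ 𝓑, ∀ B₂ ∈ 𝓑, ∃ g ∈ G, g • B₁ = B₂



/-- Dihedral-like groups: a cyclic subgroup such that everything outside is an
involution and the product of two outside elements lies inside. -/
def DihLike (G : Type*) [Group G] : Prop :=
  ∃ Z : Subgroup G, IsCyclic Z ∧ (∀ a : G, a ∉ Z → a * a = 1) ∧
    (∀ a b : G, a ∉ Z → b ∉ Z → a * b ∈ Z)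

theorem dihLike_of_surjective {G H : Type*} [Group G] [Group H] (f : G →* H)
    (hf : Function.Surjective f) (hG : DihLike G) : DihLike H := by
  obtain ⟨Z, hcyc, hsq, hprod⟩ := hG
  refine ⟨Z.map f, ?_, ?_, ?_⟩
  · exact isCyclic_of_surjective (f.subgroupMap Z) (f.subgroupMap_surjective Z)
  · intro a ha
    obtain ⟨b, rfl⟩ := hf a
    have hb : b ∉ Z := fun hb => ha ⟨b, hb, rfl⟩
    rw [← map_mul, hsq b hb, map_one]
  · intro a b ha hb
    obtain ⟨a, rfl⟩ := hf a
    obtain ⟨b, rfl⟩ := hf b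
    have ha' : a ∉ Z := fun h => ha ⟨a, h, rfl⟩
    have hb' : b ∉ Z := fun h => hb ⟨b, h, rfl⟩
    exact ⟨a * b, hprod a b ha' hb', map_mul f a b⟩

theorem dihLike_dihedral (n : ℕ) [NeZero n] : DihLike (DihedralGroup n) := by
  refine ⟨{ carrier := {x | ∃ i, x = DihedralGroup.r i}
            one_mem' := ⟨0, DihedralGroup.one_def.symm ▸ rfl⟩
            mul_mem' := ?_
            inv_mem' := ?_ }, ?_, ?_, ?_⟩
  · rintro a b ⟨i, rfl⟩ ⟨j, rfl⟩
    exact ⟨i + j, (DihedralGroup.r_mul_r i j).symm⟩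
  · rintro a ⟨i, rfl⟩
    exact ⟨-i, (inv_eq_of_mul_eq_one_left (by rw [DihedralGroup.r_mul_r, neg_add_cancel, DihedralGroup.one_def]))⟩
  · constructor
    refine ⟨⟨DihedralGroup.r 1, 1, rfl⟩, ?_⟩
    rintro ⟨x, i, rfl⟩
    refine ⟨(i.val : ℤ), ?_⟩
    apply Subtype.ext
    push_cast [zpow_natCast]
    show DihedralGroup.r 1 ^ (i.val) = DihedralGroup.r i
    rw [DihedralGroup.r_one_pow, ZMod.natCast_val, ZMod.cast_id]
  · intro a ha
    cases a with
    | r i => exact absurd ⟨i, rfl⟩ ha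
    | sr i => exact DihedralGroup.sr_mul_self i
  · intro a b ha hb
    cases a with
    | r i => exact absurd ⟨i, rfl⟩ ha
    | sr i =>
      cases b with
      | r j => exact absurd ⟨j, rfl⟩ hb
      | sr j => exact ⟨j - i, (DihedralGroup.sr_mul_sr i j).symm⟩

theorem dihLike_fix_three {X : Type*} [Fintype X] [DecidableEq X]
    (H : Subgroup (Equiv.Perm X)) (hH : DihLike H)
    (htr : ∀ a b : X, ∃ τ : H, (τ : Equiv.Perm X) a = b)
    (h : Equiv.Perm X) (hmem : h ∈ H) {x y z : X}
    (hxy : x ≠ y) (hxz : x ≠ z) (hyz : y ≠ z)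
    (hx : h x = x) (hy : h y = y) (hz : h z = z) : h = 1 := by
  classical
  obtain ⟨Z, hcyc, hsq, hprod⟩ := hH
  have appmul : ∀ (a b : H) (u : X),
      ((a * b : H) : Equiv.Perm X) u = (a : Equiv.Perm X) ((b : Equiv.Perm X) u) :=
    fun a b u => rfl
  have appinv : ∀ (a : H) (u w : X), (a : Equiv.Perm X) u = w →
      ((a⁻¹ : H) : Equiv.Perm X) w = u := by
    intro a u w hw
    have : ((a⁻¹ : H) : Equiv.Perm X) = (a : Equiv.Perm X)⁻¹ := rfl
    rw [this, ← hw, Equiv.Perm.inv_def, Equiv.symm_apply_apply]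
  -- commutativity inside Z
  have hcomm : ∀ a b : H, a ∈ Z → b ∈ Z → a * b = b * a := by
    intro a b ha hb
    obtain ⟨g, hgen⟩ := hcyc.exists_generator
    obtain ⟨m, hm⟩ := hgen ⟨a, ha⟩
    obtain ⟨l, hl⟩ := hgen ⟨b, hb⟩
    have : (⟨a, ha⟩ : Z) * ⟨b, hb⟩ = ⟨b, hb⟩ * ⟨a, ha⟩ := by
      rw [← hm, ← hl, ← zpow_add, ← zpow_add, add_comm]
    exact Subtype.ext_iff.mp this
  -- unique involution inside Z
  have huniq : ∀ a b : H, a ∈ Z → b ∈ Z → a * a = 1 → b * b = 1 →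
      a ≠ 1 → b ≠ 1 → a = b := by
    intro a b ha hb ha2 hb2 ha1 hb1
    by_contra hne
    letI : Fintype Z := Fintype.ofFinite Z
    have hle := IsCyclic.card_pow_eq_one_le (α := Z) (n := 2) (by norm_num)
    set A : Z := ⟨a, ha⟩ with hA
    set Bz : Z := ⟨b, hb⟩ with hB
    have hA1 : A ≠ 1 := fun e => ha1 (Subtype.ext_iff.mp e)
    have hB1 : Bz ≠ 1 := fun e => hb1 (Subtype.ext_iff.mp e)
    have hAB : A ≠ Bz := fun e => hne (Subtype.ext_iff.mp e)
    have hsub : ({1, A, Bz} : Finset Z) ⊆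
        Finset.univ.filter (fun q : Z => q ^ 2 = 1) := by
      intro q hq
      refine Finset.mem_filter.mpr ⟨Finset.mem_univ _, ?_⟩
      simp only [Finset.mem_insert, Finset.mem_singleton] at hq
      rcases hq with rfl | rfl | rfl
      · exact one_pow 2
      · rw [pow_two]; exact Subtype.ext ha2
      · rw [pow_two]; exact Subtype.ext hb2
    have hcard : ({1, A, Bz} : Finset Z).card = 3 := by
      rw [Finset.card_insert_of_notMem, Finset.card_insert_of_notMem,
        Finset.card_singleton]
      · simpa using hAB
      · simp only [Finset.mem_insert, Finset.mem_singleton]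
        push_neg
        exact ⟨fun e => hA1 e.symm, fun e => hB1 e.symm⟩
    have := (Finset.card_le_card hsub).trans hle
    omega
  -- Step A : an element of Z fixing one point is trivial
  have stepA : ∀ (w : X) (σ : H), σ ∈ Z → (σ : Equiv.Perm X) w = w → σ = 1 := by
    intro w σ hσ hfix
    have hall : ∀ u : X, (σ : Equiv.Perm X) u = u := by
      intro u
      obtain ⟨τ, hτ⟩ := htr w u
      by_cases hτZ : τ ∈ Z
      · have hc := hcomm σ τ hσ hτZ
        calc (σ : Equiv.Perm X) u = ((σ * τ : H) : Equiv.Perm X) w := by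
              rw [appmul, hτ]
          _ = ((τ * σ : H) : Equiv.Perm X) w := by rw [hc]
          _ = u := by rw [appmul, hfix, hτ]
      · have h1 : τ * σ ∉ Z := by
          intro hh
          exact hτZ (by simpa using Z.mul_mem hh (Z.inv_mem hσ))
        have h2 : (τ * σ) * (τ * σ) = 1 := hsq _ h1
        have h3 : τ * τ = 1 := hsq _ hτZ
        have h4 : σ * τ = τ * σ⁻¹ := by
          have hτi : τ⁻¹ = τ := inv_eq_of_mul_eq_one_left h3
          have h5 : τ * (σ * τ * σ) = 1 := by
            calc τ * (σ * τ * σ) = (τ * σ) * (τ * σ) := by group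
              _ = 1 := h2
          have h6 : σ * τ * σ = τ := by
            rw [eq_inv_of_mul_eq_one_right h5, hτi]
          calc σ * τ = (σ * τ * σ) * σ⁻¹ := by group
            _ = τ * σ⁻¹ := by rw [h6]
        have hσi : ((σ⁻¹ : H) : Equiv.Perm X) w = w := appinv σ w w hfix
        calc (σ : Equiv.Perm X) u = ((σ * τ : H) : Equiv.Perm X) w := by
              rw [appmul, hτ]
          _ = ((τ * σ⁻¹ : H) : Equiv.Perm X) w := by rw [h4]
          _ = u := by rw [appmul, hσi, hτ]
    exact Subtype.ext (Equiv.ext hall)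
  -- main argument
  set hh : H := ⟨h, hmem⟩ with hhdef
  by_cases hhZ : hh ∈ Z
  · exact Subtype.ext_iff.mp (stepA x hh hhZ hx)
  exfalso
  have hne1 : hh ≠ 1 := fun e => hhZ (e ▸ Z.one_mem)
  have hh2 : hh * hh = 1 := hsq hh hhZ
  have hhi : hh⁻¹ = hh := inv_eq_of_mul_eq_one_left hh2
  -- Step B : at most one nontrivial element fixes a given point
  have stepB : ∀ (w : X) (a b : H), (a : Equiv.Perm X) w = w →
      (b : Equiv.Perm X) w = w → a ≠ 1 → b ≠ 1 → a = b := by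
    intro w a b haw hbw ha1 hb1
    have haZ : a ∉ Z := fun hh' => ha1 (stepA w a hh' haw)
    have hbZ : b ∉ Z := fun hh' => hb1 (stepA w b hh' hbw)
    have hab : a * b ∈ Z := hprod a b haZ hbZ
    have habw : ((a * b : H) : Equiv.Perm X) w = w := by rw [appmul, hbw, haw]
    have hab1 : a * b = 1 := stepA w _ hab habw
    have ha2 : a * a = 1 := hsq a haZ
    have : b = a⁻¹ := eq_inv_of_mul_eq_one_right hab1
    rw [this, inv_eq_of_mul_eq_one_left ha2]
  -- inversion property
  have hinvw : ∀ w : H, w ∈ Z → hh * w * hh = w⁻¹ := by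
    intro w hw
    have h1 : hh * w ∉ Z := by
      intro hmem'
      exact hhZ (by simpa using Z.mul_mem hmem' (Z.inv_mem hw))
    have h2 : (hh * w) * (hh * w) = 1 := hsq _ h1
    have : (hh * w * hh) * w = 1 := by
      calc (hh * w * hh) * w = (hh * w) * (hh * w) := by group
        _ = 1 := h2
    exact eq_inv_of_mul_eq_one_left this
  -- elements commuting with hh and moving x
  have hclass : ∀ ν : H, ν * hh = hh * ν → (ν : Equiv.Perm X) x ≠ x →
      (ν ∈ Z ∧ ν * ν = 1 ∧ ν ≠ 1) ∨
      (∃ w : H, w ∈ Z ∧ w * w = 1 ∧ w ≠ 1 ∧ ν = hh * w) := by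
    intro ν hcom hmove
    have hν1 : ν ≠ 1 := by
      intro e; apply hmove; rw [e]; rfl
    by_cases hνZ : ν ∈ Z
    · left
      refine ⟨hνZ, ?_, hν1⟩
      have hi := hinvw ν hνZ
      have : hh * ν * hh = ν := by
        calc hh * ν * hh = ν * (hh * hh) := by rw [← mul_assoc, ← hcom]
          _ = ν := by rw [hh2, mul_one]
      have hνν : ν⁻¹ = ν := by rw [← hi, this]
      nth_rewrite 2 [← hνν]
      exact mul_inv_cancel ν
    · right
      have hν2 : ν * ν = 1 := hsq ν hνZ
      have hwZ : hh * ν ∈ Z := hprod hh ν hhZ hνZ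
      have hw2 : (hh * ν) * (hh * ν) = 1 := by
        calc (hh * ν) * (hh * ν) = hh * (ν * hh) * ν := by group
          _ = hh * (hh * ν) * ν := by rw [hcom]
          _ = (hh * hh) * (ν * ν) := by group
          _ = 1 := by rw [hh2, hν2, one_mul]
      have hw1 : hh * ν ≠ 1 := by
        intro e
        have hνh : ν = hh := by
          calc ν = hh⁻¹ := eq_inv_of_mul_eq_one_right e
            _ = hh := hhi
        exact hmove (by rw [hνh]; exact hx)
      exact ⟨hh * ν, hwZ, hw2, hw1, by rw [← mul_assoc, hh2, one_mul]⟩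
  -- get the commuting elements carrying x to y and z
  obtain ⟨τ, hτ⟩ := htr x y
  obtain ⟨ς, hς⟩ := htr x z
  have hτc : τ * hh * τ⁻¹ = hh := by
    refine stepB y _ _ ?_ hy ?_ hne1
    · have h1 : ((τ⁻¹ : H) : Equiv.Perm X) y = x := appinv τ x y hτ
      rw [appmul, appmul, h1]
      show (τ : Equiv.Perm X) (h x) = y
      rw [hx, hτ]
    · intro e
      apply hne1
      have := congrArg (fun q => τ⁻¹ * q * τ) e
      simpa [mul_assoc] using this
  have hςc : ς * hh * ς⁻¹ = hh := by
    refine stepB z _ _ ?_ hz ?_ hne1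
    · have h1 : ((ς⁻¹ : H) : Equiv.Perm X) z = x := appinv ς x z hς
      rw [appmul, appmul, h1]
      show (ς : Equiv.Perm X) (h x) = z
      rw [hx, hς]
    · intro e
      apply hne1
      have := congrArg (fun q => ς⁻¹ * q * ς) e
      simpa [mul_assoc] using this
  have hτcom : τ * hh = hh * τ := by
    calc τ * hh = (τ * hh * τ⁻¹) * τ := by group
      _ = hh * τ := by rw [hτc]
  have hςcom : ς * hh = hh * ς := by
    calc ς * hh = (ς * hh * ς⁻¹) * ς := by group
      _ = hh * ς := by rw [hςc]
  have hτmove : (τ : Equiv.Perm X) x ≠ x := by rw [hτ]; exact fun e => hxy e.symm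
  have hςmove : (ς : Equiv.Perm X) x ≠ x := by rw [hς]; exact fun e => hxz e.symm
  rcases hclass τ hτcom hτmove with ⟨hτZ, hτ2, hτ1⟩ | ⟨w₁, hw₁Z, hw₁2, hw₁1, hτw⟩ <;>
    rcases hclass ς hςcom hςmove with ⟨hςZ, hς2, hς1⟩ | ⟨w₂, hw₂Z, hw₂2, hw₂1, hςw⟩
  · exact hyz (by rw [← hτ, ← hς, huniq τ ς hτZ hςZ hτ2 hς2 hτ1 hς1])
  · have := huniq τ w₂ hτZ hw₂Z hτ2 hw₂2 hτ1 hw₂1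
    apply hyz
    rw [← hτ, ← hς, hςw, ← this, appmul]
    have e2 : h ((τ : Equiv.Perm X) x) = (τ : Equiv.Perm X) x := by rw [hτ]; exact hy
    exact e2.symm
  · have := huniq w₁ ς hw₁Z hςZ hw₁2 hς2 hw₁1 hς1
    apply hyz
    rw [← hτ, ← hς, hτw, this, appmul]
    have e2 : h ((ς : Equiv.Perm X) x) = (ς : Equiv.Perm X) x := by rw [hς]; exact hz
    exact e2
  · have := huniq w₁ w₂ hw₁Z hw₂Z hw₁2 hw₂2 hw₁1 hw₂1
    exact hyz (by rw [← hτ, ← hς, hτw, hςw, this])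

section BlockRes

variable {P : Type*} [Fintype P] [DecidableEq P]

theorem stab_mem_iff {G : Subgroup (Equiv.Perm P)} {D : Finset P}
    (h : MulAction.stabilizer G D) (x : P) :
    x ∈ D ↔ (h.1.1 : Equiv.Perm P) x ∈ D := by
  constructor
  · intro hx
    have h2 : h.1 • D = D := h.2
    have := Finset.smul_mem_smul_finset (a := h.1) hx
    rw [h2] at this
    exact this
  · intro hx
    have h2 : h.1 • D = D := h.2
    have hx' : h.1 • x ∈ h.1 • D := by rw [h2]; exact hx
    exact (Finset.smul_mem_smul_finset_iff h.1).mp hx' 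

/-- Restriction of the block stabilizer to a permutation group on the block. -/
def blockRes (G : Subgroup (Equiv.Perm P)) (D : Finset P) :
    MulAction.stabilizer G D →* Equiv.Perm {x : P // x ∈ D} :=
  MonoidHom.mk'
    (fun h => Equiv.Perm.subtypePerm h.1.1 (fun x => (stab_mem_iff h x).symm))
    (fun a b => Equiv.ext fun u => rfl)

theorem blockRes_apply {G : Subgroup (Equiv.Perm P)} {D : Finset P}
    (h : MulAction.stabilizer G D) (a : {x : P // x ∈ D}) :
    ((blockRes G D h a : {x : P // x ∈ D}) : P) = h.1.1 a.1 := rfl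

/-- `permCongr` as a `MulEquiv`. -/
def permCongrMulEquiv {α β : Type*} (e : α ≃ β) : Equiv.Perm α ≃* Equiv.Perm β :=
  { e.permCongr with
    map_mul' := fun p q => Equiv.ext fun b => by
      simp [Equiv.permCongr_apply, Equiv.Perm.mul_apply] }

theorem dihLike_blockRes_range_of {G : Subgroup (Equiv.Perm P)} {B D : Finset P}
    (σ : Equiv.Perm P) (hσG : σ ∈ G) (hσ : (⟨σ, hσG⟩ : G) • B = D)
    (hdl : DihLike ((blockRes G B).range)) : DihLike ((blockRes G D).range) := by
  set gσ : G := ⟨σ, hσG⟩ with hgσ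
  have hmemiff : ∀ x : P, x ∈ B ↔ σ x ∈ D := by
    intro x
    rw [← hσ]
    constructor
    · intro hx; exact Finset.smul_mem_smul_finset hx
    · intro hx; exact (Finset.smul_mem_smul_finset_iff gσ).mp hx
  set E : {x : P // x ∈ B} ≃ {x : P // x ∈ D} := Equiv.subtypeEquiv σ hmemiff with hE
  set F := permCongrMulEquiv E with hF
  have hBinv : gσ⁻¹ • D = B := by rw [← hσ, inv_smul_smul]
  have hmap : Subgroup.map F.toMonoidHom (blockRes G B).range = (blockRes G D).range := by
    ext π
    constructor
    · rintro ⟨π', ⟨hb, rfl⟩, rfl⟩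
      have hstab : (gσ * hb.1 * gσ⁻¹) • D = D := by
        rw [mul_smul, mul_smul, hBinv, hb.2, hσ]
      refine ⟨⟨gσ * hb.1 * gσ⁻¹, hstab⟩, ?_⟩
      apply Equiv.ext
      intro d
      apply Subtype.ext
      show (σ * hb.1.1 * σ⁻¹ : Equiv.Perm P) d.1 = _
      simp only [hF, permCongrMulEquiv, MulEquiv.toMonoidHom_eq_coe]
      show _ = ((E.symm.trans (blockRes G B hb)).trans E d : P)
      simp only [Equiv.trans_apply, hE, Equiv.subtypeEquiv_symm,
        Equiv.subtypeEquiv_apply]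
      rw [blockRes_apply]
      rfl
    · rintro ⟨hd, rfl⟩
      have hstab : (gσ⁻¹ * hd.1 * gσ) • B = B := by
        rw [mul_smul, mul_smul, hσ, hd.2, hBinv]
      refine ⟨blockRes G B ⟨gσ⁻¹ * hd.1 * gσ, hstab⟩, ⟨_, rfl⟩, ?_⟩
      apply Equiv.ext
      intro d
      apply Subtype.ext
      show ((E.symm.trans _).trans E d : P) = hd.1.1 d.1
      simp only [Equiv.trans_apply, hE, Equiv.subtypeEquiv_symm,
        Equiv.subtypeEquiv_apply]
      rw [blockRes_apply]
      show (σ * (σ⁻¹ * hd.1.1 * σ) * σ⁻¹ : Equiv.Perm P) d.1 = hd.1.1 d.1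
      simp [mul_assoc]
  have e := F.subgroupMap (blockRes G B).range
  rw [MulEquiv.toMonoidHom_eq_coe] at hmap
  rw [hmap] at e
  exact dihLike_of_surjective e.toMonoidHom e.surjective hdl

end BlockRes

section Counting

variable {P : Type*} [Fintype P] [DecidableEq P]

theorem deg_mul {𝓑 : Finset (Finset P)} {v k lam : ℕ} (hD : IsDesign 𝓑 v k lam)
    (x : P) : (𝓑.filter fun C => x ∈ C).card * (k - 1) = (v - 1) * lam := by
  classical
  set Fx := 𝓑.filter fun C => x ∈ C with hFx
  have e1 : ∑ C ∈ Fx, (C.erase x).card = Fx.card * (k - 1) := by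
    apply Finset.sum_const_nat
    intro C hC
    rw [hFx, Finset.mem_filter] at hC
    rw [Finset.card_erase_of_mem hC.2, hD.blocks_card C hC.1]
  have e2 : ∀ C ∈ Fx, (C.erase x).card =
      ∑ y ∈ Finset.univ.erase x, (if y ∈ C then 1 else 0) := by
    intro C _
    rw [← Finset.card_filter]
    congr 1
    ext y
    simp only [Finset.mem_filter, Finset.mem_erase, Finset.mem_univ, true_and, and_comm]
  have e3 : ∑ C ∈ Fx, (C.erase x).card =
      ∑ y ∈ Finset.univ.erase x, ∑ C ∈ Fx, (if y ∈ C then 1 else 0) := by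
    rw [Finset.sum_congr rfl e2, Finset.sum_comm]
  have e4 : ∀ y ∈ Finset.univ.erase x, (∑ C ∈ Fx, (if y ∈ C then 1 else 0)) = lam := by
    intro y hy
    have hxy : x ≠ y := fun e => (Finset.mem_erase.mp hy).1 e.symm
    rw [← Finset.card_filter, hFx, Finset.filter_filter]
    exact hD.pair_blocks x y hxy
  have e5 : ∑ y ∈ Finset.univ.erase x, ∑ C ∈ Fx, (if y ∈ C then 1 else 0)
      = (v - 1) * lam := by
    rw [Finset.sum_const_nat e4, Finset.card_erase_of_mem (Finset.mem_univ x),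
      Finset.card_univ, hD.card_points]
  rw [← e1, e3, e5]

theorem point_degree {𝓑 : Finset (Finset P)} {v k lam : ℕ} (hD : IsDesign 𝓑 v k lam)
    (hsym : 𝓑.card = v) (x : P) : (𝓑.filter fun C => x ∈ C).card = k := by
  classical
  have hv5 : 5 ≤ v := by have := hD.two_lt_k; have := hD.k_lt_v; omega
  have hvpos : 0 < v := by omega
  have hk1 : 0 < k - 1 := by have := hD.two_lt_k; omega
  -- all degrees are equal
  have hdeq : ∀ x' : P, (𝓑.filter fun C => x' ∈ C).card
      = (𝓑.filter fun C => x ∈ C).card := by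
    intro x'
    have := deg_mul hD x
    have h2 := deg_mul hD x'
    exact Nat.eq_of_mul_eq_mul_right hk1 (by rw [this, h2])
  -- total count
  have etot : ∑ x' : P, (𝓑.filter fun C => x' ∈ C).card = v * k := by
    have e1 : ∀ x' : P, (𝓑.filter fun C => x' ∈ C).card
        = ∑ C ∈ 𝓑, (if x' ∈ C then 1 else 0) := fun x' => Finset.card_filter _ _
    calc ∑ x' : P, (𝓑.filter fun C => x' ∈ C).card
        = ∑ x' : P, ∑ C ∈ 𝓑, (if x' ∈ C then 1 else 0) := Finset.sum_congr rfl
          (fun x' _ => e1 x')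
      _ = ∑ C ∈ 𝓑, ∑ x' : P, (if x' ∈ C then 1 else 0) := Finset.sum_comm
      _ = ∑ C ∈ 𝓑, C.card := by
          apply Finset.sum_congr rfl
          intro C _
          rw [← Finset.card_filter]
          congr 1
          exact Finset.filter_univ_mem C
      _ = ∑ C ∈ 𝓑, k := Finset.sum_congr rfl (fun C hC => hD.blocks_card C hC)
      _ = v * k := by rw [Finset.sum_const, hsym, smul_eq_mul]
  have : v * (𝓑.filter fun C => x ∈ C).card = v * k := by
    rw [← etot]
    rw [Finset.sum_congr rfl (fun x' _ => hdeq x'), Finset.sum_const, Finset.card_univ,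
      hD.card_points, smul_eq_mul]
  exact Nat.eq_of_mul_eq_mul_left hvpos this

theorem lam_identity {𝓑 : Finset (Finset P)} {v k lam : ℕ} (hD : IsDesign 𝓑 v k lam)
    (hsym : 𝓑.card = v) : (v - 1) * lam = k * (k - 1) := by
  classical
  have hv5 : 5 ≤ v := by have := hD.two_lt_k; have := hD.k_lt_v; omega
  have : 0 < Fintype.card P := by rw [hD.card_points]; omega
  obtain ⟨x⟩ := Fintype.card_pos_iff.mp this
  rw [← deg_mul hD x, point_degree hD hsym x]

end Counting

section FactA

variable {P : Type*} [Fintype P] [DecidableEq P]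

theorem inter_card {𝓑 : Finset (Finset P)} {v k lam : ℕ} (hD : IsDesign 𝓑 v k lam)
    (hsym : 𝓑.card = v) {B₀ C : Finset P} (hB₀ : B₀ ∈ 𝓑) (hC : C ∈ 𝓑)
    (hne : C ≠ B₀) : (C ∩ B₀).card = lam := by
  classical
  set S := 𝓑.erase B₀ with hS
  set m : Finset P → ℕ := fun C' => (C' ∩ B₀).card with hm
  have hmcard : ∀ C' : Finset P, m C' = ∑ x ∈ B₀, (if x ∈ C' then 1 else 0) := by
    intro C'
    show (C' ∩ B₀).card = _
    rw [show C' ∩ B₀ = B₀.filter (fun x => x ∈ C') from by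
      ext t; simp [Finset.mem_inter, and_comm], Finset.card_filter]
  -- first moment
  have i1 : ∑ C' ∈ S, m C' = k * (k - 1) := by
    have swap : ∑ C' ∈ S, m C' = ∑ x ∈ B₀, ∑ C' ∈ S, (if x ∈ C' then 1 else 0) := by
      rw [Finset.sum_congr rfl (fun C' _ => hmcard C'), Finset.sum_comm]
    have inner : ∀ x ∈ B₀, (∑ C' ∈ S, if x ∈ C' then 1 else 0) = k - 1 := by
      intro x hx
      rw [← Finset.card_filter, hS, Finset.filter_erase,
        Finset.card_erase_of_mem (Finset.mem_filter.mpr ⟨hB₀, hx⟩),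
        point_degree hD hsym x]
    rw [swap, Finset.sum_const_nat inner, hD.blocks_card B₀ hB₀]
  -- second moment
  have i2 : ∑ C' ∈ S, m C' * (m C' - 1) = (k * (k - 1)) * (lam - 1) := by
    have perC : ∀ C' ∈ S, m C' * (m C' - 1) =
        ∑ x ∈ B₀, ∑ y ∈ B₀.erase x, (if x ∈ C' ∧ y ∈ C' then 1 else 0) := by
      intro C' _
      have inner : ∀ x ∈ B₀, (∑ y ∈ B₀.erase x, (if x ∈ C' ∧ y ∈ C' then 1 else 0))
          = if x ∈ C' then ((C' ∩ B₀).erase x).card else 0 := by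
        intro x _
        by_cases hxC : x ∈ C'
        · simp only [hxC, true_and, if_true]
          rw [← Finset.card_filter]
          congr 1
          ext t
          simp only [Finset.mem_filter, Finset.mem_erase, Finset.mem_inter]
          tauto
        · simp [hxC]
      rw [Finset.sum_congr rfl inner, ← Finset.sum_filter]
      have hfe : B₀.filter (fun x => x ∈ C') = C' ∩ B₀ := by
        ext t; simp [Finset.mem_inter, and_comm]
      rw [hfe]
      rw [Finset.sum_const_nat (m := m C' - 1)]
      intro x hx
      rw [Finset.card_erase_of_mem hx]
    have swap : ∑ C' ∈ S, ∑ x ∈ B₀, ∑ y ∈ B₀.erase x, (if x ∈ C' ∧ y ∈ C' then 1 else 0)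
        = ∑ x ∈ B₀, ∑ y ∈ B₀.erase x, ∑ C' ∈ S, (if x ∈ C' ∧ y ∈ C' then 1 else 0) := by
      rw [Finset.sum_comm]
      apply Finset.sum_congr rfl
      intro x _
      rw [Finset.sum_comm]
    have inner2 : ∀ x ∈ B₀, ∀ y ∈ B₀.erase x,
        (∑ C' ∈ S, (if x ∈ C' ∧ y ∈ C' then 1 else 0)) = lam - 1 := by
      intro x hx y hy
      obtain ⟨hyx, hyB⟩ := Finset.mem_erase.mp hy
      rw [← Finset.card_filter, hS, Finset.filter_erase,
        Finset.card_erase_of_mem (Finset.mem_filter.mpr ⟨hB₀, hx, hyB⟩),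
        hD.pair_blocks x y (fun e => hyx e.symm)]
    calc ∑ C' ∈ S, m C' * (m C' - 1)
        = ∑ x ∈ B₀, ∑ y ∈ B₀.erase x, ∑ C' ∈ S, (if x ∈ C' ∧ y ∈ C' then 1 else 0) := by
          rw [Finset.sum_congr rfl perC, swap]
      _ = ∑ x ∈ B₀, ∑ y ∈ B₀.erase x, (lam - 1) := by
          apply Finset.sum_congr rfl
          intro x hx
          exact Finset.sum_congr rfl (inner2 x hx)
      _ = (k * (k - 1)) * (lam - 1) := by
          rw [Finset.sum_congr rfl
            (fun x hx => Finset.sum_const_nat (fun y _ => rfl)),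
            Finset.sum_congr rfl (fun x hx => by
              rw [Finset.card_erase_of_mem hx, hD.blocks_card B₀ hB₀]),
            Finset.sum_const_nat (fun x _ => rfl), hD.blocks_card B₀ hB₀, mul_assoc]
  have i3 : S.card = v - 1 := by
    rw [hS, Finset.card_erase_of_mem hB₀, hsym]
  -- variance over ℤ
  have hk3 : 3 ≤ k := hD.two_lt_k
  have hv5 : 5 ≤ v := by have := hD.k_lt_v; omega
  have hlam1 : 1 ≤ lam := hD.lam_pos
  have castmm : ∀ mm : ℕ, ((mm * (mm - 1) : ℕ) : ℤ) = (mm : ℤ) * ((mm : ℤ) - 1) := by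
    intro mm
    rcases mm with _ | mm
    · simp
    · push_cast; ring
  have Hsum1 : ∑ C' ∈ S, (m C' : ℤ) = (k : ℤ) * ((k : ℤ) - 1) := by
    have h := congrArg (Nat.cast : ℕ → ℤ) i1
    push_cast [Nat.cast_sub (by omega : 1 ≤ k)] at h
    exact h
  have Hsum2 : ∑ C' ∈ S, (m C' : ℤ) * ((m C' : ℤ) - 1)
      = (k : ℤ) * ((k : ℤ) - 1) * ((lam : ℤ) - 1) := by
    have h := congrArg (Nat.cast : ℕ → ℤ) i2
    rw [Nat.cast_sum] at h
    rw [Finset.sum_congr rfl (fun C' _ => (castmm (m C')).symm)]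
    rw [h]
    push_cast [Nat.cast_sub (by omega : 1 ≤ k), Nat.cast_sub (by omega : 1 ≤ lam)]
    ring
  have key : ((v : ℤ) - 1) * (lam : ℤ) = (k : ℤ) * ((k : ℤ) - 1) := by
    have h := congrArg (Nat.cast : ℕ → ℤ) (lam_identity hD hsym)
    push_cast [Nat.cast_sub (by omega : 1 ≤ k), Nat.cast_sub (by omega : 1 ≤ v)] at h
    exact h
  have hzero : ∑ C' ∈ S, ((m C' : ℤ) - (lam : ℤ)) ^ 2 = 0 := by
    have expand : ∀ C' ∈ S, ((m C' : ℤ) - (lam : ℤ)) ^ 2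
        = (m C' : ℤ) * ((m C' : ℤ) - 1) + (1 - 2 * (lam : ℤ)) * (m C' : ℤ)
          + (lam : ℤ) ^ 2 := by
      intro C' _; ring
    rw [Finset.sum_congr rfl expand, Finset.sum_add_distrib, Finset.sum_add_distrib,
      ← Finset.mul_sum, Finset.sum_const, Hsum1, Hsum2, nsmul_eq_mul, i3,
      Nat.cast_sub (by omega : 1 ≤ v)]
    linear_combination (lam : ℤ) * key
  have hall := (Finset.sum_eq_zero_iff_of_nonneg
    (fun C' _ => sq_nonneg ((m C' : ℤ) - (lam : ℤ)))).mp hzero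
  have hCS : C ∈ S := Finset.mem_erase.mpr ⟨hne, hC⟩
  have := hall C hCS
  have h0 : (m C : ℤ) - (lam : ℤ) = 0 := by
    exact pow_eq_zero_iff (by norm_num) |>.mp this
  have : (m C : ℤ) = (lam : ℤ) := by linarith
  exact_mod_cast this

end FactA

/-- **Lemma 6.4.** Let `G` be a flag-transitive automorphism group of a symmetric design
with `λ > 1`. If `G_B` or the induced permutation group `G_B^B` is dihedral of order
`2n` (`n ≥ 3`), then `G_B` acts faithfully on `B`. -/
theorem stmt_16 (𝓑 : Finset (Finset P)) (v k lam n : ℕ)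
    (hD : IsDesign 𝓑 v k lam) (hsym : 𝓑.card = v) (hlam : 1 < lam)
    (G : Subgroup (Equiv.Perm P)) (hAut : IsAutGroup G 𝓑)
    (hflag : IsFlagTransitive G 𝓑) (hn : 3 ≤ n)
    (B : Finset P) (hB : B ∈ 𝓑)
    (hdih : Nonempty (MulAction.stabilizer G B ≃* DihedralGroup n) ∨
      (∃ φ : MulAction.stabilizer G B →* Equiv.Perm B,
        (∀ (h : MulAction.stabilizer G B) (a : B), (φ h a : P) = h • (a : P)) ∧
        Nonempty (φ.range ≃* DihedralGroup n))) :
    ∀ g : G, g • B = B → (∀ a ∈ B, g • a = a) → g = 1 := by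
  classical
  intro g hgB hgfix
  by_contra hg1
  have hk3 : 3 ≤ k := hD.two_lt_k
  have hlam1 : 1 ≤ lam := hD.lam_pos
  -- a moved point
  have hmoved : ∃ y : P, g • y ≠ y := by
    by_contra hall
    push_neg at hall
    exact hg1 (Subtype.ext (Equiv.ext fun a => hall a))
  obtain ⟨y, hy⟩ := hmoved
  have hyB : y ∉ B := fun hmem => hy (hgfix y hmem)
  set y' : P := g • y with hy'def
  have hyy' : y ≠ y' := fun e => hy e.symm
  have hBinv : g⁻¹ • B = B := by
    conv_lhs => rw [← hgB]
    rw [inv_smul_smul]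
  have hy'B : y' ∉ B := by
    intro hmem
    apply hyB
    have h1 : g⁻¹ • y' ∈ g⁻¹ • B := Finset.smul_mem_smul_finset hmem
    rw [hBinv] at h1
    rwa [hy'def, inv_smul_smul] at h1
  have hblock : ∀ C ∈ 𝓑, g • C ∈ 𝓑 := fun C hC => hAut g.1 g.2 C hC
  have hginj : ∀ C C' : Finset P, g • C = g • C' → C = C' := by
    intro C C' hcc
    have := congrArg (fun t => g⁻¹ • t) hcc
    simpa [inv_smul_smul] using this
  have hfixmem : ∀ {t : P} {C : Finset P}, t ∈ B → t ∈ C → t ∈ g • C := by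
    intro t C htB htC
    have h1 : g • t ∈ g • C := Finset.smul_mem_smul_finset htC
    rwa [hgfix t htB] at h1
  rcases Nat.lt_or_ge lam 3 with hlt | hl3
  · -- λ = 2 : every block is invariant, contradiction at a moved point
    have hlam2 : lam = 2 := by omega
    have hinv : ∀ C ∈ 𝓑, g • C = C := by
      intro C hC
      by_cases hCB : C = B
      · rw [hCB]; exact hgB
      have hcard : (C ∩ B).card = lam := inter_card hD hsym hB hC hCB
      rw [hlam2] at hcard
      obtain ⟨a, b, hab, habs⟩ := Finset.card_eq_two.mp hcard
      have haCB : a ∈ C ∩ B := by rw [habs]; simp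
      have hbCB : b ∈ C ∩ B := by rw [habs]; simp
      obtain ⟨haC, haB⟩ := Finset.mem_inter.mp haCB
      obtain ⟨hbC, hbB⟩ := Finset.mem_inter.mp hbCB
      have hQ : (𝓑.filter fun C' => a ∈ C' ∧ b ∈ C').card = 2 := by
        rw [hD.pair_blocks a b hab, hlam2]
      have hBQ : B ∈ 𝓑.filter fun C' => a ∈ C' ∧ b ∈ C' :=
        Finset.mem_filter.mpr ⟨hB, haB, hbB⟩
      have hCQ : C ∈ 𝓑.filter fun C' => a ∈ C' ∧ b ∈ C' :=
        Finset.mem_filter.mpr ⟨hC, haC, hbC⟩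
      have hgCQ : g • C ∈ 𝓑.filter fun C' => a ∈ C' ∧ b ∈ C' :=
        Finset.mem_filter.mpr ⟨hblock C hC, hfixmem haB haC, hfixmem hbB hbC⟩
      have hgCB : g • C ≠ B := by
        intro e
        exact hCB (hginj C B (by rw [e, hgB]))
      obtain ⟨s, t, hst, hQst⟩ := Finset.card_eq_two.mp hQ
      rw [hQst] at hBQ hCQ hgCQ
      simp only [Finset.mem_insert, Finset.mem_singleton] at hBQ hCQ hgCQ
      rcases hBQ with rfl | rfl
      · rcases hCQ with rfl | rfl
        · exact absurd rfl hCB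
        · rcases hgCQ with e | e
          · exact absurd e hgCB
          · exact e
      · rcases hCQ with rfl | rfl
        · rcases hgCQ with e | e
          · exact e
          · exact absurd e hgCB
        · exact absurd rfl hCB
    have hsub : (𝓑.filter fun C => y ∈ C) ⊆ 𝓑.filter fun C => y ∈ C ∧ y' ∈ C := by
      intro C hC'
      obtain ⟨hC𝓑, hyC⟩ := Finset.mem_filter.mp hC'
      refine Finset.mem_filter.mpr ⟨hC𝓑, hyC, ?_⟩
      have h1 : g • y ∈ g • C := Finset.smul_mem_smul_finset hyC
      rwa [hinv C hC𝓑] at h1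
    have hle := Finset.card_le_card hsub
    rw [point_degree hD hsym y, hD.pair_blocks y y' hyy', hlam2] at hle
    omega
  · -- λ ≥ 3 : a block through {y, y'} is invariant and has 3 fixed points
    have hQpos : (0 : ℕ) < (𝓑.filter fun C => y ∈ C ∧ y' ∈ C).card := by
      rw [hD.pair_blocks y y' hyy']; omega
    obtain ⟨D₀, hD₀mem⟩ := Finset.card_pos.mp hQpos
    obtain ⟨hD₀𝓑, hyD₀, hy'D₀⟩ := Finset.mem_filter.mp hD₀mem
    have hD₀B : D₀ ≠ B := fun e => hyB (e ▸ hyD₀)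
    have hDBcard : (D₀ ∩ B).card = lam := inter_card hD hsym hB hD₀𝓑 hD₀B
    have hgD : g • D₀ = D₀ := by
      by_contra hne
      have hgD𝓑 : g • D₀ ∈ 𝓑 := hblock D₀ hD₀𝓑
      have hcap : (g • D₀ ∩ D₀).card = lam := inter_card hD hsym hD₀𝓑 hgD𝓑 hne
      have hsub : insert y' (D₀ ∩ B) ⊆ g • D₀ ∩ D₀ := by
        intro t ht
        rcases Finset.mem_insert.mp ht with rfl | htDB
        · exact Finset.mem_inter.mpr ⟨Finset.smul_mem_smul_finset hyD₀, hy'D₀⟩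
        · obtain ⟨htD, htB⟩ := Finset.mem_inter.mp htDB
          exact Finset.mem_inter.mpr ⟨hfixmem htB htD, htD⟩
      have hy'DB : y' ∉ D₀ ∩ B := fun hmem => hy'B (Finset.mem_inter.mp hmem).2
      have hle := Finset.card_le_card hsub
      rw [Finset.card_insert_of_notMem hy'DB, hDBcard, hcap] at hle
      omega
    -- three distinct fixed points in D₀ ∩ B
    have h3 : 3 ≤ (D₀ ∩ B).card := by rw [hDBcard]; omega
    obtain ⟨x₁, hx₁⟩ := Finset.card_pos.mp (by omega : 0 < (D₀ ∩ B).card)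
    have h2 : 0 < ((D₀ ∩ B).erase x₁).card := by
      rw [Finset.card_erase_of_mem hx₁]; omega
    obtain ⟨x₂, hx₂⟩ := Finset.card_pos.mp h2
    have h1 : 0 < (((D₀ ∩ B).erase x₁).erase x₂).card := by
      rw [Finset.card_erase_of_mem hx₂, Finset.card_erase_of_mem hx₁]; omega
    obtain ⟨x₃, hx₃⟩ := Finset.card_pos.mp h1
    obtain ⟨hx₃₂, hx₃'⟩ := Finset.mem_erase.mp hx₃
    obtain ⟨hx₃₁, hx₃DB⟩ := Finset.mem_erase.mp hx₃'
    obtain ⟨hx₂₁, hx₂DB⟩ := Finset.mem_erase.mp hx₂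
    have hx₁D := (Finset.mem_inter.mp hx₁).1
    have hx₁B := (Finset.mem_inter.mp hx₁).2
    have hx₂D := (Finset.mem_inter.mp hx₂DB).1
    have hx₂B := (Finset.mem_inter.mp hx₂DB).2
    have hx₃D := (Finset.mem_inter.mp hx₃DB).1
    have hx₃B := (Finset.mem_inter.mp hx₃DB).2
    -- DihLike for the induced group on B
    haveI : NeZero n := ⟨by omega⟩
    have hdlB : DihLike ((blockRes G B).range) := by
      rcases hdih with he | ⟨φ, hφ, he⟩ <;> obtain ⟨e⟩ := he
      · have h1 : DihLike (MulAction.stabilizer G B) :=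
          dihLike_of_surjective e.symm.toMonoidHom e.symm.surjective (dihLike_dihedral n)
        exact dihLike_of_surjective (blockRes G B).rangeRestrict
          (MonoidHom.rangeRestrict_surjective _) h1
      · have h1 : DihLike (φ.range) :=
          dihLike_of_surjective e.symm.toMonoidHom e.symm.surjective (dihLike_dihedral n)
        have hφeq : φ = blockRes G B := by
          apply MonoidHom.ext
          intro h'
          apply Equiv.ext
          intro a
          apply Subtype.ext
          rw [hφ h' a]
          rfl
        rwa [hφeq] at h1
    -- transport to D₀
    have hBne : B.Nonempty := by
      rw [← Finset.card_pos, hD.blocks_card B hB]; omega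
    have hDne : D₀.Nonempty := ⟨y, hyD₀⟩
    obtain ⟨b0, hb0⟩ := hBne
    obtain ⟨d0, hd0⟩ := hDne
    obtain ⟨σ, hσG, _, hσB⟩ := hflag B hB D₀ hD₀𝓑 b0 hb0 d0 hd0
    have hdlD : DihLike ((blockRes G D₀).range) :=
      dihLike_blockRes_range_of σ hσG hσB hdlB
    -- transitivity of the induced group on D₀
    have htr : ∀ a b : {x : P // x ∈ D₀},
        ∃ τ : (blockRes G D₀).range, (τ : Equiv.Perm {x : P // x ∈ D₀}) a = b := by
      intro a b
      obtain ⟨τ, hτG, hτpt, hτD⟩ := hflag D₀ hD₀𝓑 D₀ hD₀𝓑 a.1 a.2 b.1 b.2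
      refine ⟨⟨blockRes G D₀ ⟨⟨τ, hτG⟩, hτD⟩, ⟨_, rfl⟩⟩, ?_⟩
      apply Subtype.ext
      exact hτpt
    -- the restriction of g to D₀ fixes three points, hence is trivial
    have hgstab : g ∈ MulAction.stabilizer G D₀ := hgD
    set π := blockRes G D₀ ⟨g, hgstab⟩ with hπdef
    have hπmem : π ∈ (blockRes G D₀).range := ⟨_, rfl⟩
    have hfix1 : π ⟨x₁, hx₁D⟩ = ⟨x₁, hx₁D⟩ := Subtype.ext (hgfix x₁ hx₁B)
    have hfix2 : π ⟨x₂, hx₂D⟩ = ⟨x₂, hx₂D⟩ := Subtype.ext (hgfix x₂ hx₂B)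
    have hfix3 : π ⟨x₃, hx₃D⟩ = ⟨x₃, hx₃D⟩ := Subtype.ext (hgfix x₃ hx₃B)
    have hπ1 : π = 1 := by
      refine dihLike_fix_three (blockRes G D₀).range hdlD htr π hπmem
        (x := ⟨x₁, hx₁D⟩) (y := ⟨x₂, hx₂D⟩) (z := ⟨x₃, hx₃D⟩) ?_ ?_ ?_ hfix1 hfix2 hfix3
      · exact fun e => hx₂₁ (Subtype.ext_iff.mp e).symm
      · exact fun e => hx₃₁ (Subtype.ext_iff.mp e).symm
      · exact fun e => hx₃₂ (Subtype.ext_iff.mp e).symm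
    apply hy
    have := congrArg (fun p : Equiv.Perm {x : P // x ∈ D₀} => (p ⟨y, hyD₀⟩).1) hπ1
    exact this
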